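/- Let n ≥ 1 be an integer and t a real number. Then lim_{m→∞} Σ_{h=1}^{n} (e^{−h(h−1)t/(2m)} / 2^{2n}) e^{−ht} C(2n, n−h) Σ_{j=0}^{h−1} (−1)^j e^{(2ht)j/(2m)} C(h−1,j) · [2(2m−2j−1)] / [(2m)(2m+h−2j−1)] · (2m+h−j−1)! / (h! (2m−j−1)!) = (2/2^{2n}) Σ_{h=1}^{n} e^{−ht} C(2n, n−h) (1/h) L^{(1)}_{h−1}(2ht), where the limit is over natural numbers m → ∞. (This identifies the time-dependent part of the n-th moment of the spectral distribution μ_t^{(1,1/2)} of the free Jacobi process with parameters λ = 1, θ = 1/2.) -/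

import Mathlib

open Filter Finset Polynomial
open scoped fwdDiff

-- iterated forward difference commutes with finite sums
lemma fwdDiff_iter_sum {ι : Type*} (s : Finset ι) (f : ι → ℝ → ℝ) (K : ℕ) (y : ℝ) :
    Δ_[1] ^[K] (fun z => ∑ i ∈ s, f i z) y = ∑ i ∈ s, Δ_[1] ^[K] (f i) y := by
  have h1 : (fun z => ∑ i ∈ s, f i z) = (∑ i ∈ s, f i) := by
    ext z; simp [Finset.sum_apply]
  rw [h1, ← fwdDiff_aux.coe_fwdDiffₗ_pow (1:ℝ), map_sum]
  simp [Finset.sum_apply, fwdDiff_aux.coe_fwdDiffₗ_pow]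

lemma fwdDiff_iter_const_mul (c : ℝ) (f : ℝ → ℝ) (K : ℕ) (y : ℝ) :
    Δ_[1] ^[K] (fun z => c * f z) y = c * Δ_[1] ^[K] f y := by
  have h1 : (fun z => c * f z) = c • f := by ext z; simp
  rw [h1, fwdDiff_iter_const_smul]; simp

lemma fwdDiff_iter_pow_zero (K : ℕ) : ∀ d : ℕ, d ≤ K →
    Δ_[1] ^[K] (fun y : ℝ => y ^ d) 0 = if d = K then (K.factorial : ℝ) else 0 := by
  induction K with
  | zero => intro d hd; interval_cases d; simp
  | succ K IH =>
    intro d hd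
    rw [Function.iterate_succ_apply]
    rcases Nat.eq_zero_or_pos d with rfl | hd0
    · have h1 : Δ_[(1:ℝ)] (fun y : ℝ => y ^ 0) = fun _ : ℝ => (0:ℝ) := by
        ext y; simp [fwdDiff]
      rw [h1]
      have h2 : Δ_[(1:ℝ)] ^[K] (fun _ : ℝ => (0:ℝ)) 0 = 0 := by
        simp [fwdDiff_iter_eq_sum_shift]
      simp [h2]
    · have hΔ : Δ_[(1:ℝ)] (fun y : ℝ => y ^ d) =
          fun y : ℝ => ∑ e ∈ range d, (d.choose e : ℝ) * y ^ e := by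
        ext y
        rw [fwdDiff]
        rw [add_pow]
        rw [Finset.sum_range_succ]
        simp [mul_comm]
      rw [hΔ, fwdDiff_iter_sum]
      have : ∀ e ∈ range d, Δ_[(1:ℝ)] ^[K] (fun y : ℝ => (d.choose e : ℝ) * y ^ e) 0
          = (d.choose e : ℝ) * (if e = K then (K.factorial : ℝ) else 0) := by
        intro e he
        simp only [mem_range] at he
        rw [fwdDiff_iter_const_mul, IH e (by omega)]
      rw [Finset.sum_congr rfl this]
      by_cases hdK : d = K + 1
      · subst hdK
        rw [Finset.sum_eq_single K]
        · rw [if_pos rfl, if_pos rfl, Nat.choose_succ_self_right, Nat.factorial_succ]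
          push_cast; ring
        · intro b hb hbK; simp [hbK]
        · intro h; simp at h
      · have hdK' : d ≤ K := by omega
        rw [Finset.sum_eq_zero, if_neg hdK]
        intro e he
        have : e ≠ K := by simp at he; omega
        simp [this]

lemma FDstar (K : ℕ) (p : Polynomial ℝ) (hp : p.natDegree ≤ K) :
    ∑ j ∈ range (K + 1), (-1 : ℝ) ^ j * (K.choose j : ℝ) * p.eval (j : ℝ)
      = (-1) ^ K * (K.factorial : ℝ) * p.coeff K := by
  have key : Δ_[(1:ℝ)] ^[K] (fun y => p.eval y) 0 = (K.factorial : ℝ) * p.coeff K := by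
    have hev : (fun y : ℝ => p.eval y)
        = fun y : ℝ => ∑ d ∈ range (K + 1), p.coeff d * y ^ d := by
      ext y; exact Polynomial.eval_eq_sum_range' (Nat.lt_succ_of_le hp) y
    rw [hev, fwdDiff_iter_sum]
    have : ∀ d ∈ range (K+1), Δ_[(1:ℝ)] ^[K] (fun y : ℝ => p.coeff d * y ^ d) 0
        = p.coeff d * (if d = K then (K.factorial : ℝ) else 0) := by
      intro d hd
      rw [fwdDiff_iter_const_mul, fwdDiff_iter_pow_zero K d (by simp at hd; omega)]
    rw [Finset.sum_congr rfl this, Finset.sum_eq_single K]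
    · rw [if_pos rfl]; ring
    · intro b _ hbK; simp [hbK]
    · intro hK; simp at hK
  have shift := fwdDiff_iter_eq_sum_shift (1:ℝ) (fun y => p.eval y) K 0
  rw [key] at shift
  have : ∀ j ∈ range (K+1),
      (((-1 : ℤ) ^ (K - j) * (K.choose j : ℤ)) • p.eval ((0:ℝ) + j • (1:ℝ)))
        = (-1:ℝ)^K * ((-1 : ℝ) ^ j * (K.choose j : ℝ) * p.eval (j:ℝ)) := by
    intro j hj
    simp only [mem_range] at hj
    have hKj : K - j + j = K := by omega
    have hsgn : (-1:ℝ) ^ (K - j) = (-1)^K * (-1)^j := by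
      have : (-1:ℝ)^(K-j) * ((-1)^j * (-1)^j) = (-1)^K * (-1)^j := by
        rw [← mul_assoc, ← pow_add, hKj]
      simpa [← pow_add, ← two_mul, pow_mul] using this
    push_cast
    simp only [zsmul_eq_mul]
    push_cast
    rw [hsgn]
    ring
  rw [Finset.sum_congr rfl this, ← Finset.mul_sum] at shift
  have h1 : (-1:ℝ)^K * (-1:ℝ)^K = 1 := by
    rw [← pow_add]; exact Even.neg_one_pow ⟨K, rfl⟩
  set S := ∑ j ∈ range (K + 1), (-1 : ℝ) ^ j * (K.choose j : ℝ) * p.eval (j : ℝ) with hS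
  linear_combination (-(-1:ℝ)^K) * shift - S * h1

namespace FJ

noncomputable def esum (s : Finset ℕ) (b : ℕ → ℝ) (k : ℕ) : ℝ :=
  ∑ A ∈ s.powersetCard k, ∏ i ∈ A, b i

lemma esum_zero (s : Finset ℕ) (b : ℕ → ℝ) : esum s b 0 = 1 := by
  simp [esum]

lemma esum_eq_zero (s : Finset ℕ) (b : ℕ → ℝ) (k : ℕ) (hk : s.card < k) :
    esum s b k = 0 := by
  simp [esum, Finset.powersetCard_eq_empty.2 hk]

lemma prod_one_add (s : Finset ℕ) (b : ℕ → ℝ) (ε : ℝ) :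
    ∏ i ∈ s, (1 + b i * ε) = ∑ k ∈ range (s.card + 1), esum s b k * ε ^ k := by
  have h := Finset.prod_add (fun i => b i * ε) (fun _ => (1:ℝ)) s
  have h2 : ∏ i ∈ s, (1 + b i * ε) = ∏ i ∈ s, (b i * ε + 1) := by
    apply Finset.prod_congr rfl; intros; ring
  rw [h2, h, Finset.sum_powerset]
  apply Finset.sum_congr rfl
  intro k _
  rw [esum, Finset.sum_mul]
  apply Finset.sum_congr rfl
  intro A hA
  have hcard : A.card = k := (Finset.mem_powersetCard.1 hA).2
  rw [Finset.prod_mul_distrib, Finset.prod_const, hcard, prod_const_one, mul_one]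

lemma esum_insert (a : ℕ) (s : Finset ℕ) (b : ℕ → ℝ) (ha : a ∉ s) (k : ℕ) :
    esum (insert a s) b (k + 1) = esum s b (k + 1) + b a * esum s b k := by
  rw [esum, Finset.powersetCard_succ_insert ha, Finset.sum_union, Finset.sum_image]
  · rw [esum, esum, Finset.mul_sum]
    congr 1
    apply Finset.sum_congr rfl
    intro A hA
    have haA : a ∉ A := fun h => ha ((Finset.mem_powersetCard.1 hA).1 h)
    rw [Finset.prod_insert haA]
  · intro A hA B hB hS
    have haA : a ∉ A := fun h => ha ((Finset.mem_powersetCard.1 hA).1 h)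
    have haB : a ∉ B := fun h => ha ((Finset.mem_powersetCard.1 hB).1 h)
    rw [← Finset.erase_insert haA, ← Finset.erase_insert haB, hS]
  · rw [Finset.disjoint_left]
    intro A hA hA'
    have haA : a ∉ A := fun h => ha ((Finset.mem_powersetCard.1 hA).1 h)
    rcases Finset.mem_image.1 hA' with ⟨B, _, rfl⟩
    exact haA (Finset.mem_insert_self a B)

/-- coefficient value `b j i` appearing in the expansion -/
noncomputable def bcoef (h j i : ℕ) : ℝ := (h:ℝ) - 1 - (j:ℝ) - (i:ℝ)

noncomputable def gpol (h k : ℕ) : Polynomial ℝ :=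
  ∑ A ∈ (range h).powersetCard k, ∏ i ∈ A, (C ((h:ℝ) - 1 - (i:ℝ)) - X)

lemma gpol_eval (h k : ℕ) (j : ℕ) :
    (gpol h k).eval (j:ℝ) = esum (range h) (bcoef h j) k := by
  simp only [gpol, esum, eval_finset_sum, eval_prod, eval_sub, eval_C, eval_X, bcoef]
  apply Finset.sum_congr rfl; intro A _; apply Finset.prod_congr rfl; intro i _; ring

lemma gpol_natDegree (h k : ℕ) : (gpol h k).natDegree ≤ k := by
  apply Polynomial.natDegree_sum_le_of_forall_le
  intro A hA
  refine le_trans (Polynomial.natDegree_prod_le _ _) ?_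
  have hcard : A.card = k := (Finset.mem_powersetCard.1 hA).2
  calc ∑ i ∈ A, (C ((h:ℝ) - 1 - (i:ℝ)) - X).natDegree ≤ ∑ _i ∈ A, 1 := by
        apply Finset.sum_le_sum; intro i _
        have heq : (C ((h:ℝ) - 1 - (i:ℝ)) - X) = -(X - C ((h:ℝ) - 1 - (i:ℝ))) := by ring
        rw [heq, Polynomial.natDegree_neg, Polynomial.natDegree_X_sub_C]
    _ = k := by simp [hcard]
  
lemma gpol_coeff (h k : ℕ) : (gpol h k).coeff k = (-1)^k * (h.choose k : ℝ) := by
  rw [gpol, Polynomial.finset_sum_coeff]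
  have : ∀ A ∈ (range h).powersetCard k,
      (∏ i ∈ A, (C ((h:ℝ) - 1 - (i:ℝ)) - X)).coeff k = (-1)^k := by
    intro A hA
    have hcard : A.card = k := (Finset.mem_powersetCard.1 hA).2
    have hre : ∀ i ∈ A, (C ((h:ℝ) - 1 - (i:ℝ)) - X) = -(X - C ((h:ℝ) - 1 - (i:ℝ))) := by
      intros; ring
    have hre2 : ∀ i ∈ A, -(X - C ((h:ℝ) - 1 - (i:ℝ)))
        = (-1 : ℝ[X]) * (X - C ((h:ℝ) - 1 - (i:ℝ))) := by intros; ring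
    rw [Finset.prod_congr rfl hre, Finset.prod_congr rfl hre2, Finset.prod_mul_distrib,
      Finset.prod_const, hcard]
    have hmon : (∏ i ∈ A, (X - C ((h:ℝ) - 1 - (i:ℝ)))).Monic :=
      monic_prod_of_monic _ _ (fun i _ => monic_X_sub_C _)
    have hdeg : (∏ i ∈ A, (X - C ((h:ℝ) - 1 - (i:ℝ)))).natDegree = k := by
      rw [Polynomial.natDegree_prod]
      · rw [Finset.sum_congr rfl (fun i (_ : i ∈ A) => Polynomial.natDegree_X_sub_C
          ((h:ℝ) - 1 - (i:ℝ)))]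
        simp [hcard]
      · intro i _; exact (monic_X_sub_C _).ne_zero
    have hC : ((-1 : ℝ[X])) ^ k = C ((-1:ℝ)^k) := by simp
    rw [hC, Polynomial.coeff_C_mul]
    rw [show k = (∏ i ∈ A, (X - C ((h:ℝ) - 1 - (i:ℝ)))).natDegree from hdeg.symm,
      hmon.coeff_natDegree, mul_one]
  rw [Finset.sum_congr rfl this, Finset.sum_const, Finset.card_powersetCard, Finset.card_range]
  simp [mul_comm]


noncomputable def qpol (h : ℕ) : ℕ → Polynomial ℝ
  | 0 => 1
  | (k+1) => gpol h (k+1) - (C ((h:ℝ) - 1) - C 2 * X) * qpol h k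

noncomputable def Ppol (h : ℕ) : ℕ → Polynomial ℝ
  | 0 => 1
  | (k+1) => qpol h (k+1) - (C 1 + C 2 * X) * qpol h k

lemma qpol_natDegree (h : ℕ) : ∀ k, (qpol h k).natDegree ≤ k
  | 0 => by simp [qpol]
  | (k+1) => by
    rw [qpol]
    refine le_trans (Polynomial.natDegree_sub_le _ _) (max_le (gpol_natDegree h (k+1)) ?_)
    refine le_trans (Polynomial.natDegree_mul_le) ?_
    have h1 : (C ((h:ℝ) - 1) - C 2 * X).natDegree ≤ 1 := by
      refine le_trans (Polynomial.natDegree_sub_le _ _)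
        (max_le (le_trans (Polynomial.natDegree_C _).le (Nat.zero_le _)) ?_)
      refine le_trans (Polynomial.natDegree_mul_le) ?_
      rw [Polynomial.natDegree_C, Polynomial.natDegree_X]
    have := qpol_natDegree h k
    omega

lemma Ppol_natDegree (h : ℕ) : ∀ k, (Ppol h k).natDegree ≤ k
  | 0 => by simp [Ppol]
  | (k+1) => by
    rw [Ppol]
    refine le_trans (Polynomial.natDegree_sub_le _ _)
      (max_le (qpol_natDegree h (k+1)) ?_)
    refine le_trans (Polynomial.natDegree_mul_le) ?_
    have h1 : (C (1:ℝ) + C 2 * X).natDegree ≤ 1 := by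
      refine le_trans (Polynomial.natDegree_add_le _ _)
        (max_le (le_trans (Polynomial.natDegree_C _).le (Nat.zero_le _)) ?_)
      refine le_trans (Polynomial.natDegree_mul_le) ?_
      rw [Polynomial.natDegree_C, Polynomial.natDegree_X]
    have := qpol_natDegree h k
    omega

lemma linear_mul_coeff (a b : ℝ) (p : Polynomial ℝ) (k : ℕ) (hp : p.natDegree ≤ k) :
    ((C a + C b * X) * p).coeff (k+1) = b * p.coeff k := by
  rw [add_mul, Polynomial.coeff_add, Polynomial.coeff_C_mul, mul_assoc,
    Polynomial.coeff_C_mul, Polynomial.X_mul, Polynomial.coeff_mul_X]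
  rw [Polynomial.coeff_eq_zero_of_natDegree_lt (lt_of_le_of_lt hp (Nat.lt_succ_self k))]
  ring

lemma qpol_coeff_top (h : ℕ) : ∀ k, (qpol h k).coeff k
    = ∑ r ∈ range (k+1), 2^(k-r) * (-1)^r * (h.choose r : ℝ)
  | 0 => by simp [qpol]
  | (k+1) => by
    rw [qpol, Polynomial.coeff_sub]
    have heq : (C ((h:ℝ) - 1) - C 2 * X) = (C ((h:ℝ)-1) + C (-2) * X) := by
      rw [Polynomial.C_neg]; ring
    have hcgr : ∀ r ∈ range (k+1), (2:ℝ) ^ (k + 1 - r) * (-1) ^ r * (h.choose r : ℝ)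
        = 2 * (2 ^ (k - r) * (-1) ^ r * (h.choose r : ℝ)) := by
      intro r hr
      simp only [mem_range] at hr
      have : k + 1 - r = (k - r) + 1 := by omega
      rw [this, pow_succ]
      ring
    rw [heq, linear_mul_coeff _ _ _ _ (qpol_natDegree h k), gpol_coeff,
      Finset.sum_range_succ (fun r => (2:ℝ) ^ (k + 1 - r) * (-1) ^ r * (h.choose r : ℝ)) (k+1),
      Finset.sum_congr rfl hcgr, ← Finset.mul_sum, ← qpol_coeff_top h k]
    simp only [Nat.sub_self, pow_zero, one_mul]
    ring

lemma Ppol_coeff (h : ℕ) : ∀ k, (Ppol h k).coeff k = (-1)^k * (h.choose k : ℝ)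
  | 0 => by simp [Ppol]
  | (k+1) => by
    have hcgr : ∀ r ∈ range (k+1), (2:ℝ) ^ (k + 1 - r) * (-1) ^ r * (h.choose r : ℝ)
        = 2 * (2 ^ (k - r) * (-1) ^ r * (h.choose r : ℝ)) := by
      intro r hr
      simp only [mem_range] at hr
      have : k + 1 - r = (k - r) + 1 := by omega
      rw [this, pow_succ]
      ring
    rw [Ppol, Polynomial.coeff_sub, linear_mul_coeff _ _ _ _ (qpol_natDegree h k),
      qpol_coeff_top h (k+1),
      Finset.sum_range_succ (fun r => (2:ℝ) ^ (k + 1 - r) * (-1) ^ r * (h.choose r : ℝ)) (k+1),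
      Finset.sum_congr rfl hcgr, ← Finset.mul_sum, ← qpol_coeff_top h k]
    simp only [Nat.sub_self, pow_zero, one_mul]
    ring

lemma qpol_eval (h : ℕ) (j : ℕ) (hj : j < h) :
    ∀ k, (qpol h k).eval (j:ℝ) = esum ((range h).erase j) (bcoef h j) k
  | 0 => by simp [qpol, esum_zero]
  | (k+1) => by
    have hmem : j ∈ range h := mem_range.2 hj
    have hins : insert j ((range h).erase j) = range h := Finset.insert_erase hmem
    have hnot : j ∉ (range h).erase j := Finset.notMem_erase j _
    have hG : esum (range h) (bcoef h j) (k+1)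
        = esum ((range h).erase j) (bcoef h j) (k+1)
          + bcoef h j j * esum ((range h).erase j) (bcoef h j) k := by
      rw [← hins, esum_insert j _ _ hnot k]
      rw [hins]
    rw [qpol, Polynomial.eval_sub, gpol_eval, hG, Polynomial.eval_mul]
    rw [qpol_eval h j hj k]
    have : (C ((h:ℝ) - 1) - C 2 * X).eval (j:ℝ) = bcoef h j j := by
      simp [bcoef]; ring
    rw [this]
    ring

lemma ppol_eval_expand (h : ℕ) (hh : 1 ≤ h) (j : ℕ) (hj : j < h) (ε : ℝ) :
    (1 - (2*(j:ℝ)+1)*ε) * ∏ i ∈ (range h).erase j, (1 + bcoef h j i * ε)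
      = ∑ k ∈ range (h+1), (Ppol h k).eval (j:ℝ) * ε ^ k := by
  have hcard : ((range h).erase j).card = h - 1 := by
    rw [Finset.card_erase_of_mem (mem_range.2 hj), Finset.card_range]
  have hexp := prod_one_add ((range h).erase j) (bcoef h j) ε
  rw [hcard] at hexp
  have hh1 : h - 1 + 1 = h := by omega
  rw [hh1] at hexp
  rw [hexp]
  set a : ℕ → ℝ := fun k => esum ((range h).erase j) (bcoef h j) k with ha
  have hah : a h = 0 := by
    apply esum_eq_zero
    rw [hcard]; omega
  -- RHS transformation
  have hrhs : ∀ k ∈ range (h+1), (Ppol h k).eval (j:ℝ) * ε ^ k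
      = (if k = 0 then (1:ℝ) else (a k - (2*(j:ℝ)+1) * a (k-1)) * ε ^ k) := by
    intro k _
    match k with
    | 0 => simp [Ppol]
    | (k+1) =>
      rw [if_neg (Nat.succ_ne_zero k)]
      rw [Ppol, Polynomial.eval_sub, Polynomial.eval_mul, qpol_eval h j hj,
        qpol_eval h j hj]
      simp only [Nat.add_sub_cancel]
      have : (C (1:ℝ) + C 2 * X).eval (j:ℝ) = 2*(j:ℝ)+1 := by simp; ring
      rw [this]
  rw [Finset.sum_congr rfl hrhs]
  -- now split
  have hptw : ∀ k ∈ range h, (a (k+1) - (2*(j:ℝ)+1) * a k) * ε ^ (k+1)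
      = a (k+1) * ε ^ (k+1) - ((2*(j:ℝ)+1) * ε) * (a k * ε ^ k) := by
    intro k _
    rw [pow_succ]
    ring
  have h0 : a 0 = 1 := esum_zero _ _
  have hsplit : ∑ k ∈ range (h+1), (if k = 0 then (1:ℝ) else (a k - (2*(j:ℝ)+1) * a (k-1)) * ε ^ k)
      = ∑ k ∈ range (h+1), a k * ε ^ k
        - (2*(j:ℝ)+1) * ε * ∑ k ∈ range h, a k * ε ^ k := by
    rw [Finset.sum_range_succ' (fun k => a k * ε ^ k) h,
        Finset.sum_range_succ'
          (fun k => (if k = 0 then (1:ℝ) else (a k - (2*(j:ℝ)+1) * a (k-1)) * ε ^ k)) h]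
    simp only [Nat.succ_ne_zero, if_false, if_pos, Nat.add_sub_cancel, pow_zero, mul_one]
    rw [h0, Finset.mul_sum, Finset.sum_congr rfl hptw, Finset.sum_sub_distrib]
    ring
  rw [hsplit, Finset.sum_range_succ, hah]
  ring

lemma term_eq (h j m : ℕ) (x : ℝ) (hh : 1 ≤ h) (hj : j < h) (hm : h ≤ m) :
    (-1 : ℝ) ^ j * Real.exp (x * (j:ℝ) / (2 * (m:ℝ))) * ((h - 1).choose j : ℝ) *
        ((2 * (2 * (m:ℝ) - 2 * (j:ℝ) - 1)) / ((2 * (m:ℝ)) * (2 * (m:ℝ) + (h:ℝ) - 2 * (j:ℝ) - 1))) *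
        ((2 * m + h - j - 1).factorial : ℝ) / ((h.factorial : ℝ) * ((2 * m - j - 1).factorial : ℝ))
    = (-1 : ℝ) ^ j * ((h - 1).choose j : ℝ) * Real.exp (x * (j:ℝ) / (2 * (m:ℝ))) *
        (2 / (h.factorial : ℝ)) * (2 * (m:ℝ)) ^ (h - 1) *
        ((1 - (2 * (j:ℝ) + 1) * (1 / (2 * (m:ℝ)))) *
          ∏ i ∈ (range h).erase j, (1 + bcoef h j i * (1 / (2 * (m:ℝ))))) := by
  have hm1 : 1 ≤ m := le_trans hh hm
  have h2m : (2 * (m:ℝ)) ≠ 0 := by positivity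
  have hjr : (j:ℝ) + 1 ≤ (h:ℝ) := by exact_mod_cast hj
  have hjm : (j:ℝ) + 1 ≤ (m:ℝ) := by exact_mod_cast lt_of_lt_of_le hj hm
  have hpos : (0:ℝ) < 2 * (m:ℝ) + (h:ℝ) - 2 * (j:ℝ) - 1 := by linarith
  have hfact : ((2*m + h - j - 1).factorial : ℝ)
      = ((2*m - j - 1).factorial : ℝ) * ∏ i ∈ range h, ((2*m + h - j - 1 - i : ℕ) : ℝ) := by
    have e1 : 2*m + h - j - 1 - h = 2*m - j - 1 := by omega
    have e2 := Nat.factorial_mul_descFactorial (show h ≤ 2*m + h - j - 1 by omega)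
    rw [e1] at e2
    rw [← e2, Nat.descFactorial_eq_prod_range, Nat.cast_mul, Nat.cast_prod]
  have hprod : ∀ i ∈ range h, ((2*m + h - j - 1 - i : ℕ) : ℝ)
      = 2*(m:ℝ) * (1 + bcoef h j i * (1/(2*(m:ℝ)))) := by
    intro i hi
    simp only [mem_range] at hi
    have e3 : 2*m + h - j - 1 - i = 2*m + h - (j + 1 + i) := by omega
    have e4 : ((2*m + h - (j + 1 + i) : ℕ) : ℝ) = 2*(m:ℝ) + (h:ℝ) - ((j:ℝ) + 1 + (i:ℝ)) := by
      rw [Nat.cast_sub (by omega)]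
      push_cast
      ring
    rw [e3, e4, bcoef]
    field_simp
    ring
  have hcard : ((range h).erase j).card = h - 1 := by
    rw [Finset.card_erase_of_mem (mem_range.2 hj), Finset.card_range]
  have hjj : 2*(m:ℝ) * (1 + bcoef h j j * (1/(2*(m:ℝ)))) = 2 * (m:ℝ) + (h:ℝ) - 2*(j:ℝ) - 1 := by
    rw [bcoef]
    field_simp
    ring
  rw [hfact, Finset.prod_congr rfl hprod, ← Finset.mul_prod_erase _ _ (mem_range.2 hj), hjj,
    Finset.prod_mul_distrib, Finset.prod_const, hcard]
  have hfach : (h.factorial : ℝ) ≠ 0 := by positivity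
  have hfacs : (((2*m - j - 1).factorial : ℕ) : ℝ) ≠ 0 := by positivity
  have hpos' := hpos.ne'
  generalize ∏ i ∈ (range h).erase j, (1 + bcoef h j i * (1 / (2 * (m:ℝ)))) = P
  generalize hD : 2 * (m:ℝ) + (h:ℝ) - 2 * (j:ℝ) - 1 = D
  have hD' : D ≠ 0 := hD ▸ hpos'
  field_simp
  ring

noncomputable def Fj (h j : ℕ) (ε : ℝ) : ℝ :=
  (1 - (2*(j:ℝ)+1)*ε) * ∏ i ∈ (range h).erase j, (1 + bcoef h j i * ε)

noncomputable def Dcoef (h : ℕ) (x : ℝ) (l k : ℕ) : ℝ :=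
  ∑ j ∈ range h, (-1:ℝ)^j * ((h-1).choose j : ℝ)
    * (x^l * (j:ℝ)^l / (l.factorial:ℝ)) * (Ppol h k).eval (j:ℝ)

noncomputable def SMain (h : ℕ) (x : ℝ) (m : ℕ) : ℝ :=
  ∑ j ∈ range h, (-1:ℝ)^j * ((h-1).choose j : ℝ)
    * (∑ l ∈ range h, (x * (j:ℝ) * (1/(2*(m:ℝ))))^l / (l.factorial:ℝ))
    * (2/(h.factorial:ℝ)) * (2*(m:ℝ))^(h-1) * Fj h j (1/(2*(m:ℝ)))

lemma SMain_eq (h : ℕ) (hh : 1 ≤ h) (x : ℝ) (m : ℕ) :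
    SMain h x m = ∑ l ∈ range h, ∑ k ∈ range (h+1),
      (2/(h.factorial:ℝ)) * Dcoef h x l k
        * ((2*(m:ℝ))^(h-1) * (1/(2*(m:ℝ)))^(l+k)) := by
  rw [SMain]
  have hstep : ∀ j ∈ range h,
      (-1:ℝ)^j * ((h-1).choose j : ℝ)
        * (∑ l ∈ range h, (x * (j:ℝ) * (1/(2*(m:ℝ))))^l / (l.factorial:ℝ))
        * (2/(h.factorial:ℝ)) * (2*(m:ℝ))^(h-1) * Fj h j (1/(2*(m:ℝ)))
      = ∑ l ∈ range h, ∑ k ∈ range (h+1),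
          (2/(h.factorial:ℝ)) * ((-1:ℝ)^j * ((h-1).choose j : ℝ)
            * (x^l * (j:ℝ)^l / (l.factorial:ℝ)) * (Ppol h k).eval (j:ℝ))
          * ((2*(m:ℝ))^(h-1) * (1/(2*(m:ℝ)))^(l+k)) := by
    intro j hj
    simp only [mem_range] at hj
    rw [Fj, ppol_eval_expand h hh j hj (1/(2*(m:ℝ)))]
    simp only [Finset.sum_mul, Finset.mul_sum]
    rw [Finset.sum_comm]
    apply Finset.sum_congr rfl
    intro l _
    apply Finset.sum_congr rfl
    intro k _
    ring
  rw [Finset.sum_congr rfl hstep]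
  rw [Finset.sum_comm]
  apply Finset.sum_congr rfl
  intro l _
  rw [Finset.sum_comm]
  apply Finset.sum_congr rfl
  intro k _
  rw [Dcoef]
  simp only [Finset.mul_sum, Finset.sum_mul]
  all_goals
    apply Finset.sum_congr rfl
    intro j _
    ring

lemma Dcoef_eval (h : ℕ) (hh : 1 ≤ h) (x : ℝ) (l k : ℕ) (hlk : l + k ≤ h - 1) :
    Dcoef h x l k = (x^l / (l.factorial:ℝ)) * ((-1:ℝ)^(h-1) * ((h-1).factorial : ℝ))
      * (if l + k = h - 1 then (-1:ℝ)^k * (h.choose k : ℝ) else 0) := by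
  set p : Polynomial ℝ := C (x^l / (l.factorial:ℝ)) * (X^l * Ppol h k) with hp
  have hdeg : p.natDegree ≤ h - 1 := by
    have h1 : ((X:Polynomial ℝ)^l * Ppol h k).natDegree ≤ l + k := by
      refine le_trans (Polynomial.natDegree_mul_le) ?_
      have h2 := Ppol_natDegree h k
      rw [Polynomial.natDegree_X_pow]
      omega
    refine le_trans (Polynomial.natDegree_mul_le) ?_
    rw [Polynomial.natDegree_C]
    omega
  have hfd := FDstar (h-1) p hdeg
  have hr : h - 1 + 1 = h := by omega
  rw [hr] at hfd
  have hev : ∀ j ∈ range h,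
      (-1:ℝ)^j * (((h-1).choose j : ℕ) : ℝ) * p.eval (j:ℝ)
        = (-1:ℝ)^j * ((h-1).choose j : ℝ)
          * (x^l * (j:ℝ)^l / (l.factorial:ℝ)) * (Ppol h k).eval (j:ℝ) := by
    intro j _
    simp only [hp, Polynomial.eval_mul, Polynomial.eval_C, Polynomial.eval_pow,
      Polynomial.eval_X]
    ring
  rw [Finset.sum_congr rfl hev] at hfd
  rw [Dcoef, hfd]
  have hcoeff : p.coeff (h-1) = (x^l / (l.factorial:ℝ)) * (Ppol h k).coeff (h-1-l) := by
    have hmul := Polynomial.coeff_X_pow_mul (Ppol h k) l (h-1-l)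
    rw [show h - 1 - l + l = h - 1 by omega] at hmul
    rw [hp, Polynomial.coeff_C_mul, hmul]
  rw [hcoeff]
  by_cases hcase : l + k = h - 1
  · have : h - 1 - l = k := by omega
    rw [this, if_pos hcase, Ppol_coeff]
    ring
  · have hlt : (Ppol h k).natDegree < h - 1 - l := by
      have := Ppol_natDegree h k
      omega
    rw [Polynomial.coeff_eq_zero_of_natDegree_lt hlt, if_neg hcase]
    ring

noncomputable def SErr (h : ℕ) (x : ℝ) (m : ℕ) : ℝ :=
  ∑ j ∈ range h, (-1:ℝ)^j * ((h-1).choose j : ℝ)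
    * (Real.exp (x * (j:ℝ) / (2*(m:ℝ)))
        - ∑ l ∈ range h, (x * (j:ℝ) * (1/(2*(m:ℝ))))^l / (l.factorial:ℝ))
    * (2/(h.factorial:ℝ)) * (2*(m:ℝ))^(h-1) * Fj h j (1/(2*(m:ℝ)))

lemma S_eq (h : ℕ) (x : ℝ) (m : ℕ) (hh : 1 ≤ h) (hm : h ≤ m) :
    (∑ j ∈ range h, (-1 : ℝ) ^ j * Real.exp (x * (j:ℝ) / (2 * (m:ℝ))) * ((h - 1).choose j : ℝ) *
        ((2 * (2 * (m:ℝ) - 2 * (j:ℝ) - 1)) / ((2 * (m:ℝ)) * (2 * (m:ℝ) + (h:ℝ) - 2 * (j:ℝ) - 1))) *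
        ((2 * m + h - j - 1).factorial : ℝ) / ((h.factorial : ℝ) * ((2 * m - j - 1).factorial : ℝ)))
      = SMain h x m + SErr h x m := by
  rw [SMain, SErr, ← Finset.sum_add_distrib]
  apply Finset.sum_congr rfl
  intro j hj
  simp only [mem_range] at hj
  rw [term_eq h j m x hh hj hm]
  have hFj : (1 - (2 * (j:ℝ) + 1) * (1 / (2 * (m:ℝ)))) *
      ∏ i ∈ (range h).erase j, (1 + bcoef h j i * (1 / (2 * (m:ℝ))))
      = Fj h j (1/(2*(m:ℝ))) := rfl
  rw [hFj]
  ring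

lemma one_div_twoM_tendsto : Tendsto (fun m : ℕ => 1/(2*(m:ℝ))) atTop (nhds 0) := by
  have h1 : Tendsto (fun m : ℕ => 2*(m:ℝ)) atTop atTop := by
    apply Filter.Tendsto.const_mul_atTop (by norm_num : (0:ℝ) < 2)
    exact tendsto_natCast_atTop_atTop
  exact h1.inv_tendsto_atTop.congr (fun m => by simp [one_div])

lemma SErr_tendsto (h : ℕ) (hh : 1 ≤ h) (x : ℝ) :
    Tendsto (SErr h x) atTop (nhds 0) := by
  rw [show (0:ℝ) = ∑ _j ∈ range h, 0 by simp]
  unfold SErr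
  apply tendsto_finset_sum
  intro j _
  have h2m0 := one_div_twoM_tendsto
  -- B part
  have hcont : Continuous (Fj h j) := by
    unfold Fj
    exact ((continuous_const.sub (continuous_const.mul continuous_id)).mul
      (continuous_finset_prod _ (fun i _ =>
        continuous_const.add (continuous_const.mul continuous_id))))
  have hB : Tendsto (fun m : ℕ => Fj h j (1/(2*(m:ℝ)))) atTop (nhds (Fj h j 0)) :=
    (hcont.continuousAt.tendsto).comp h2m0
  -- A part
  have hA : Tendsto (fun m : ℕ => (2*(m:ℝ))^(h-1) *
      (Real.exp (x * (j:ℝ) / (2*(m:ℝ)))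
        - ∑ l ∈ range h, (x * (j:ℝ) * (1/(2*(m:ℝ))))^l / (l.factorial:ℝ)))
      atTop (nhds 0) := by
    have hyt : Tendsto (fun m : ℕ => |x * (j:ℝ) * (1/(2*(m:ℝ)))|) atTop (nhds 0) := by
      have := h2m0.const_mul (x * (j:ℝ))
      rw [mul_zero] at this
      simpa using this.abs
    have hy1 : ∀ᶠ m : ℕ in atTop, |x * (j:ℝ) * (1/(2*(m:ℝ)))| ≤ 1 := by
      filter_upwards [hyt.eventually_lt_const (by norm_num : (0:ℝ) < 1)] with m hm
      exact le_of_lt hm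
    apply squeeze_zero_norm'
      (a := fun m : ℕ => |x * (j:ℝ)|^h * ((h.succ : ℝ) / ((h.factorial:ℝ) * h)) * (1/(2*(m:ℝ))))
    · filter_upwards [hy1, eventually_ge_atTop 1] with m hym hm1
      have hm1' : (1:ℝ) ≤ (m:ℝ) := by exact_mod_cast hm1
      have h2mne : (2*(m:ℝ)) ≠ 0 := by positivity
      have hy : x * (j:ℝ) / (2*(m:ℝ)) = x * (j:ℝ) * (1/(2*(m:ℝ))) := by ring
      rw [Real.norm_eq_abs, abs_mul, abs_of_nonneg (by positivity : (0:ℝ) ≤ (2*(m:ℝ))^(h-1))]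
      have hbd := Real.exp_bound hym (by omega : 0 < h)
      calc (2*(m:ℝ))^(h-1) * |Real.exp (x * (j:ℝ) / (2*(m:ℝ)))
              - ∑ l ∈ range h, (x * (j:ℝ) * (1/(2*(m:ℝ))))^l / (l.factorial:ℝ)|
          ≤ (2*(m:ℝ))^(h-1) * (|x * (j:ℝ) * (1/(2*(m:ℝ)))|^h
              * ((h.succ : ℝ) / ((h.factorial:ℝ) * h))) := by
            apply mul_le_mul_of_nonneg_left _ (by positivity)
            rw [hy]
            exact hbd
        _ = |x * (j:ℝ)|^h * ((h.succ : ℝ) / ((h.factorial:ℝ) * h)) * (1/(2*(m:ℝ))) := by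
            have habs : |x * (j:ℝ) * (1/(2*(m:ℝ)))| = |x * (j:ℝ)| * (1/(2*(m:ℝ))) := by
              rw [abs_mul, abs_of_nonneg (by positivity : (0:ℝ) ≤ 1/(2*(m:ℝ)))]
            rw [habs, mul_pow (|x * (j:ℝ)|) (1/(2*(m:ℝ))) h]
            have hNe : (2*(m:ℝ)) * (1/(2*(m:ℝ))) = 1 := mul_one_div_cancel h2mne
            have hsplit : (1/(2*(m:ℝ)))^h = (1/(2*(m:ℝ)))^(h-1) * (1/(2*(m:ℝ))) := by
              conv_lhs => rw [show h = (h-1)+1 by omega]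
              rw [pow_succ]
            have hW : (2*(m:ℝ))^(h-1) * (1/(2*(m:ℝ)))^h = 1/(2*(m:ℝ)) := by
              rw [hsplit, ← mul_assoc, ← mul_pow, hNe, one_pow, one_mul]
            linear_combination (|x * (j:ℝ)|^h * ((h.succ:ℝ)/((h.factorial:ℝ)*(h:ℝ)))) * hW
    · have := h2m0.const_mul (|x * (j:ℝ)|^h * ((h.succ : ℝ) / ((h.factorial:ℝ) * h)))
      rw [mul_zero] at this
      exact this
  have hprod := (hA.mul hB).const_mul ((-1:ℝ)^j * ((h-1).choose j : ℝ) * (2/(h.factorial:ℝ)))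
  rw [zero_mul, mul_zero] at hprod
  apply hprod.congr
  intro m
  ring

lemma SMain_tendsto (h : ℕ) (hh : 1 ≤ h) (x : ℝ) :
    Tendsto (SMain h x) atTop
      (nhds ((2/(h:ℝ)) * ∑ l ∈ range h, (h.choose (l+1) : ℝ) * (-x)^l / (l.factorial : ℝ))) := by
  have hval : (2/(h:ℝ)) * ∑ l ∈ range h, (h.choose (l+1) : ℝ) * (-x)^l / (l.factorial : ℝ)
      = ∑ l ∈ range h, ∑ k ∈ range (h+1),
          (if l + k = h - 1 then (2/(h.factorial:ℝ)) * Dcoef h x l k else 0) := by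
    have hin : ∀ l ∈ range h, ∑ k ∈ range (h+1),
        (if l + k = h - 1 then (2/(h.factorial:ℝ)) * Dcoef h x l k else 0)
        = (2/(h.factorial:ℝ)) * Dcoef h x l (h-1-l) := by
      intro l hl
      simp only [mem_range] at hl
      have hcond : ∀ k : ℕ, (l + k = h - 1) ↔ (k = h - 1 - l) := fun k => by omega
      calc ∑ k ∈ range (h+1), (if l + k = h - 1 then (2/(h.factorial:ℝ)) * Dcoef h x l k else 0)
          = ∑ k ∈ range (h+1),
              (if k = h - 1 - l then (2/(h.factorial:ℝ)) * Dcoef h x l k else 0) := by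
            apply Finset.sum_congr rfl; intro k _; rw [if_congr (hcond k) rfl rfl]
        _ = (2/(h.factorial:ℝ)) * Dcoef h x l (h-1-l) := by
            rw [Finset.sum_ite_eq' (range (h+1)) (h-1-l)
              (fun k => (2/(h.factorial:ℝ)) * Dcoef h x l k)]
            rw [if_pos (mem_range.2 (by omega))]
    rw [Finset.sum_congr rfl hin, Finset.mul_sum]
    apply Finset.sum_congr rfl
    intro l hl
    simp only [mem_range] at hl
    rw [Dcoef_eval h hh x l (h-1-l) (by omega), if_pos (by omega)]
    have hch : ((h.choose (h-1-l) : ℕ) : ℝ) = ((h.choose (l+1) : ℕ) : ℝ) := by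
      have he : h - 1 - l = h - (l+1) := by omega
      rw [he, Nat.choose_symm (by omega : l + 1 ≤ h)]
    have h1 : (-1:ℝ)^(h-1-l) * (-1:ℝ)^l = (-1:ℝ)^(h-1) := by
      rw [← pow_add]; congr 1; omega
    have h2 : ((-1:ℝ)^(h-1-l))^2 = 1 := by
      rw [← pow_mul]; exact Even.neg_one_pow ⟨h-1-l, by ring⟩
    have hsgn : (-1:ℝ)^(h-1) * (-1:ℝ)^(h-1-l) = (-1:ℝ)^l := by
      linear_combination (-(-1:ℝ)^(h-1-l)) * h1 + (-1:ℝ)^l * h2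
    have h3 : (h.factorial:ℝ) = (h:ℝ) * ((h-1).factorial:ℝ) := by
      exact_mod_cast (Nat.mul_factorial_pred (by omega)).symm
    have hfac : 2/(h.factorial:ℝ) * ((h-1).factorial:ℝ) = 2/(h:ℝ) := by
      rw [h3]
      have hhne : (h:ℝ) ≠ 0 := by positivity
      have hfne : ((h-1).factorial:ℝ) ≠ 0 := by positivity
      field_simp
    rw [hch]
    symm
    calc 2/(h.factorial:ℝ) * ((x^l/(l.factorial:ℝ))
            * ((-1:ℝ)^(h-1) * ((h-1).factorial:ℝ))
            * ((-1:ℝ)^(h-1-l) * ((h.choose (l+1) : ℕ) : ℝ)))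
        = (2/(h.factorial:ℝ) * ((h-1).factorial:ℝ))
            * (((-1:ℝ)^(h-1) * (-1:ℝ)^(h-1-l)) * ((h.choose (l+1) : ℕ) : ℝ)
              * x^l / (l.factorial:ℝ)) := by ring
      _ = (2/(h:ℝ)) * ((-1:ℝ)^l * ((h.choose (l+1) : ℕ) : ℝ) * x^l / (l.factorial:ℝ)) := by
          rw [hfac, hsgn]
      _ = 2/(h:ℝ) * (((h.choose (l+1) : ℕ) : ℝ) * (-x)^l / (l.factorial:ℝ)) := by
          rw [neg_pow]; ring
  rw [tendsto_congr (SMain_eq h hh x), hval]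
  apply tendsto_finset_sum
  intro l hl
  apply tendsto_finset_sum
  intro k hk
  simp only [mem_range] at hl hk
  rcases lt_trichotomy (l+k) (h-1) with hc | hc | hc
  · have hD : Dcoef h x l k = 0 := by
      rw [Dcoef_eval h hh x l k (by omega), if_neg (by omega)]; ring
    rw [if_neg (by omega)]
    have hz : (fun m : ℕ => (2/(h.factorial:ℝ)) * Dcoef h x l k
        * ((2*(m:ℝ))^(h-1) * (1/(2*(m:ℝ)))^(l+k))) = fun _ => (0:ℝ) := by
      funext m; rw [hD]; ring
    rw [hz]
    exact tendsto_const_nhds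
  · rw [if_pos hc]
    have hev : ∀ᶠ m : ℕ in atTop, (2/(h.factorial:ℝ)) * Dcoef h x l k
        = (2/(h.factorial:ℝ)) * Dcoef h x l k
          * ((2*(m:ℝ))^(h-1) * (1/(2*(m:ℝ)))^(l+k)) := by
      filter_upwards [eventually_ge_atTop 1] with m hm
      have hm' : (1:ℝ) ≤ (m:ℝ) := by exact_mod_cast hm
      have h2mne : (2*(m:ℝ)) ≠ 0 := by positivity
      rw [hc, ← mul_pow, mul_one_div_cancel h2mne, one_pow, mul_one]
    exact Filter.Tendsto.congr' hev tendsto_const_nhds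
  · rw [if_neg (by omega)]
    have hbase : Tendsto (fun m : ℕ => (1/(2*(m:ℝ)))^(l+k-(h-1))) atTop (nhds 0) := by
      have hp := one_div_twoM_tendsto.pow (l+k-(h-1))
      rw [zero_pow (by omega : l+k-(h-1) ≠ 0)] at hp
      exact hp
    have hconst := hbase.const_mul ((2/(h.factorial:ℝ)) * Dcoef h x l k)
    rw [mul_zero] at hconst
    have hev : ∀ᶠ m : ℕ in atTop,
        (2/(h.factorial:ℝ)) * Dcoef h x l k * (1/(2*(m:ℝ)))^(l+k-(h-1))
        = (2/(h.factorial:ℝ)) * Dcoef h x l k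
          * ((2*(m:ℝ))^(h-1) * (1/(2*(m:ℝ)))^(l+k)) := by
      filter_upwards [eventually_ge_atTop 1] with m hm
      have hm' : (1:ℝ) ≤ (m:ℝ) := by exact_mod_cast hm
      have h2mne : (2*(m:ℝ)) ≠ 0 := by positivity
      have hsplit : (1/(2*(m:ℝ)))^(l+k) = (1/(2*(m:ℝ)))^(h-1) * (1/(2*(m:ℝ)))^(l+k-(h-1)) := by
        rw [← pow_add]; congr 1; omega
      have hone : (2*(m:ℝ))^(h-1) * (1/(2*(m:ℝ)))^(h-1) = 1 := by
        rw [← mul_pow, mul_one_div_cancel h2mne, one_pow]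
      rw [hsplit]
      linear_combination (-(2 / (h.factorial:ℝ) * Dcoef h x l k
        * (1/(2*(m:ℝ)))^(l+k-(h-1)))) * hone
    exact Filter.Tendsto.congr' hev hconst

lemma core_limit (h : ℕ) (hh : 1 ≤ h) (x : ℝ) :
    Tendsto (fun m : ℕ =>
      ∑ j ∈ range h, (-1 : ℝ) ^ j * Real.exp (x * (j:ℝ) / (2 * (m:ℝ))) * ((h - 1).choose j : ℝ) *
        ((2 * (2 * (m:ℝ) - 2 * (j:ℝ) - 1)) / ((2 * (m:ℝ)) * (2 * (m:ℝ) + (h:ℝ) - 2 * (j:ℝ) - 1))) *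
        ((2 * m + h - j - 1).factorial : ℝ) / ((h.factorial : ℝ) * ((2 * m - j - 1).factorial : ℝ)))
      atTop
      (nhds ((2/(h:ℝ)) * ∑ l ∈ range h, (h.choose (l+1) : ℝ) * (-x)^l / (l.factorial : ℝ))) := by
  have hsum := (SMain_tendsto h hh x).add (SErr_tendsto h hh x)
  rw [add_zero] at hsum
  apply Filter.Tendsto.congr' ?_ hsum
  filter_upwards [eventually_ge_atTop h] with m hm
  exact (S_eq h x m hh hm).symm

end FJ

open FJ Finset

/-- The time-dependent part of the `n`-th moment of the spectral distribution `μ_t^{(1,1/2)}`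
of the free Jacobi process: the large-`m` limit of the double sum equals
`(2/2^{2n}) ∑_{h=1}^n e^{−ht} C(2n, n−h) (1/h) L^{(1)}_{h−1}(2ht)`, where
`L^{(1)}_{h−1}(x) = ∑_{l=0}^{h−1} C(h,l+1) (−x)^l / l!`. -/
theorem stmt_4 (n : ℕ) (hn : 1 ≤ n) (t : ℝ) :
    Tendsto (fun m : ℕ =>
      ∑ h ∈ Finset.Icc 1 n,
        (Real.exp (-((h : ℝ) * ((h : ℝ) - 1) * t) / (2 * (m : ℝ))) / 2 ^ (2 * n)) *
          Real.exp (-((h : ℝ) * t)) * ((2 * n).choose (n - h) : ℝ) *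
          ∑ j ∈ Finset.range h,
            (-1 : ℝ) ^ j * Real.exp ((2 * (h : ℝ) * t) * (j : ℝ) / (2 * (m : ℝ))) *
              ((h - 1).choose j : ℝ) *
              ((2 * (2 * (m : ℝ) - 2 * (j : ℝ) - 1)) /
                ((2 * (m : ℝ)) * (2 * (m : ℝ) + (h : ℝ) - 2 * (j : ℝ) - 1))) *
              ((2 * m + h - j - 1).factorial : ℝ) /
              ((h.factorial : ℝ) * ((2 * m - j - 1).factorial : ℝ)))
      atTop
      (nhds ((2 / 2 ^ (2 * n)) *
        ∑ h ∈ Finset.Icc 1 n,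
          Real.exp (-((h : ℝ) * t)) * ((2 * n).choose (n - h) : ℝ) * (1 / (h : ℝ)) *
            ∑ l ∈ Finset.range h,
              (h.choose (l + 1) : ℝ) * (-(2 * (h : ℝ) * t)) ^ l / (l.factorial : ℝ))) := by
  have key : ∀ h ∈ Finset.Icc 1 n, Tendsto (fun m : ℕ =>
      (Real.exp (-((h : ℝ) * ((h : ℝ) - 1) * t) / (2 * (m : ℝ))) / 2 ^ (2 * n)) *
        Real.exp (-((h : ℝ) * t)) * ((2 * n).choose (n - h) : ℝ) *
        ∑ j ∈ Finset.range h,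
          (-1 : ℝ) ^ j * Real.exp ((2 * (h : ℝ) * t) * (j : ℝ) / (2 * (m : ℝ))) *
            ((h - 1).choose j : ℝ) *
            ((2 * (2 * (m : ℝ) - 2 * (j : ℝ) - 1)) /
              ((2 * (m : ℝ)) * (2 * (m : ℝ) + (h : ℝ) - 2 * (j : ℝ) - 1))) *
            ((2 * m + h - j - 1).factorial : ℝ) /
            ((h.factorial : ℝ) * ((2 * m - j - 1).factorial : ℝ)))
      atTop
      (nhds (((1:ℝ) / 2 ^ (2 * n) * Real.exp (-((h : ℝ) * t)) * ((2 * n).choose (n - h) : ℝ)) *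
        ((2/(h:ℝ)) * ∑ l ∈ range h,
          (h.choose (l+1) : ℝ) * (-(2*(h:ℝ)*t))^l / (l.factorial : ℝ)))) := by
    intro h hmem
    have hh : 1 ≤ h := (Finset.mem_Icc.1 hmem).1
    have hcore := core_limit h hh (2*(h:ℝ)*t)
    have harg : Tendsto (fun m : ℕ => -((h : ℝ) * ((h : ℝ) - 1) * t) / (2 * (m : ℝ)))
        atTop (nhds 0) := by
      have h0 := one_div_twoM_tendsto.const_mul (-((h : ℝ) * ((h : ℝ) - 1) * t))
      rw [mul_zero] at h0
      exact h0.congr (fun m => by ring)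
    have hexp1 : Tendsto (fun m : ℕ =>
        Real.exp (-((h : ℝ) * ((h : ℝ) - 1) * t) / (2 * (m : ℝ)))) atTop (nhds 1) := by
      have h1 := (Real.continuous_exp.continuousAt (x := (0:ℝ))).tendsto.comp harg
      rwa [Real.exp_zero] at h1
    have hpref : Tendsto (fun m : ℕ =>
        Real.exp (-((h : ℝ) * ((h : ℝ) - 1) * t) / (2 * (m : ℝ))) / 2 ^ (2 * n)
          * Real.exp (-((h:ℝ)*t)) * ((2*n).choose (n-h) : ℝ)) atTop
        (nhds ((1:ℝ) / 2 ^ (2*n) * Real.exp (-((h:ℝ)*t)) * ((2*n).choose (n-h):ℝ))) :=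
      ((hexp1.div_const _).mul_const _).mul_const _
    exact hpref.mul hcore
  have total := tendsto_finset_sum (Finset.Icc 1 n) key
  have hval : ∑ h ∈ Finset.Icc 1 n,
      (((1:ℝ) / 2 ^ (2 * n) * Real.exp (-((h : ℝ) * t)) * ((2 * n).choose (n - h) : ℝ)) *
        ((2/(h:ℝ)) * ∑ l ∈ range h,
          (h.choose (l+1) : ℝ) * (-(2*(h:ℝ)*t))^l / (l.factorial : ℝ)))
      = (2 / 2 ^ (2 * n)) *
        ∑ h ∈ Finset.Icc 1 n,
          Real.exp (-((h : ℝ) * t)) * ((2 * n).choose (n - h) : ℝ) * (1 / (h : ℝ)) *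
            ∑ l ∈ Finset.range h,
              (h.choose (l + 1) : ℝ) * (-(2 * (h : ℝ) * t)) ^ l / (l.factorial : ℝ) := by
    rw [Finset.mul_sum]
    apply Finset.sum_congr rfl
    intro h _
    ring
  rw [← hval]
  exact total
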